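/- For any two finite metric spaces M and N in general position with the same number n ≥ 3 of points, there exists ε > 0 such that the open balls U_ε(M) and U_ε(N) in the Gromov–Hausdorff space are isometric. -/

import Mathlib

/-- `M` is in general position: all nonzero distances are pairwise distinct (as
unordered pairs) and all triangle inequalities are strict. -/
def InGeneralPosition (M : Type*) [MetricSpace M] : Prop :=
  (∀ x y z w : M, x ≠ y → z ≠ w → ({x, y} : Set M) ≠ {z, w} → dist x y ≠ dist z w) ∧
    (∀ x y z : M, x ≠ y → y ≠ z → x ≠ z → dist x z < dist x y + dist y z)

open GromovHausdorff Metric Set Function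

noncomputable section

namespace Stmt13


/-- min of a finite family of positive reals is bounded below by a positive constant. -/
lemma pos_min {ι : Type*} [Finite ι] (f : ι → ℝ) (hf : ∀ i, 0 < f i) :
    ∃ c > 0, ∀ i, c ≤ f i := by
  cases isEmpty_or_nonempty ι
  · exact ⟨1, one_pos, fun i => (IsEmpty.false i).elim⟩
  · cases nonempty_fintype ι
    refine ⟨Finset.univ.inf' Finset.univ_nonempty f, ?_, fun i => Finset.inf'_le _ (Finset.mem_univ i)⟩
    exact (Finset.lt_inf'_iff _).2 fun i _ => hf i

/-- labelings: surjections onto M that preserve distances up to b. -/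
def IsLab {X M : Type*} [MetricSpace X] [MetricSpace M] (b : ℝ) (f : X → M) : Prop :=
  Surjective f ∧ ∀ x y, |dist x y - dist (f x) (f y)| ≤ b

section Corr

variable {X Y : Type*} [MetricSpace X] [CompactSpace X] [Nonempty X]
  [MetricSpace Y] [CompactSpace Y] [Nonempty Y]

lemma exists_corr {r : ℝ} (h : dist (toGHSpace X) (toGHSpace Y) < r) :
    ∃ R : Set (X × Y), (∀ x, ∃ y, (x, y) ∈ R) ∧ (∀ y, ∃ x, (x, y) ∈ R) ∧
      ∀ p ∈ R, ∀ q ∈ R, |dist p.1 q.1 - dist p.2 q.2| ≤ 2 * r := by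
  have hH : hausdorffDist (range (optimalGHInjl X Y)) (range (optimalGHInjr X Y)) < r := by
    rw [hausdorffDist_optimal]; exact h
  have fin : EMetric.hausdorffEdist (range (optimalGHInjl X Y)) (range (optimalGHInjr X Y)) ≠ ⊤ :=
    hausdorffEdist_ne_top_of_nonempty_of_bounded (range_nonempty _) (range_nonempty _)
      (isCompact_range (isometry_optimalGHInjl X Y).continuous).isBounded
      (isCompact_range (isometry_optimalGHInjr X Y).continuous).isBounded
  refine ⟨{p | dist (optimalGHInjl X Y p.1) (optimalGHInjr X Y p.2) < r}, ?_, ?_, ?_⟩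
  · intro x
    obtain ⟨y, ⟨y', rfl⟩, hy⟩ := exists_dist_lt_of_hausdorffDist_lt (mem_range_self x) hH fin
    exact ⟨y', hy⟩
  · intro y
    obtain ⟨x, ⟨x', rfl⟩, hx⟩ := exists_dist_lt_of_hausdorffDist_lt' (mem_range_self y) hH fin
    exact ⟨x', by simpa [dist_comm] using hx⟩
  · rintro ⟨x, y⟩ hp ⟨x', y'⟩ hq
    have h1 : dist x x' = dist (optimalGHInjl X Y x) (optimalGHInjl X Y x') :=
      ((isometry_optimalGHInjl X Y).dist_eq _ _).symm
    have h2 : dist y y' = dist (optimalGHInjr X Y y) (optimalGHInjr X Y y') :=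
      ((isometry_optimalGHInjr X Y).dist_eq _ _).symm
    rw [h1, h2]
    calc |dist (optimalGHInjl X Y x) (optimalGHInjl X Y x')
          - dist (optimalGHInjr X Y y) (optimalGHInjr X Y y')|
        ≤ dist (optimalGHInjl X Y x) (optimalGHInjr X Y y)
          + dist (optimalGHInjl X Y x') (optimalGHInjr X Y y') := by
          have := dist_dist_dist_le (optimalGHInjl X Y x) (optimalGHInjl X Y x')
            (optimalGHInjr X Y y) (optimalGHInjr X Y y')
          rwa [Real.dist_eq] at this
      _ ≤ 2 * r := by have := hp.out; have := hq.out; simp only [mem_setOf_eq] at *; linarith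

lemma dist_le_of_corr (R : Set (X × Y)) (htot : ∀ x, ∃ y, (x, y) ∈ R)
    (hsurj : ∀ y, ∃ x, (x, y) ∈ R) {r : ℝ} (hr : 0 ≤ r)
    (hdis : ∀ p ∈ R, ∀ q ∈ R, |dist p.1 q.1 - dist p.2 q.2| ≤ 2 * r) :
    dist (toGHSpace X) (toGHSpace Y) ≤ r := by
  refine le_of_forall_pos_le_add fun η hη => ?_
  haveI : Nonempty R := by
    obtain ⟨y, hy⟩ := htot (Classical.arbitrary X); exact ⟨⟨_, hy⟩⟩
  letI : MetricSpace (X ⊕ Y) :=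
    glueMetricApprox (fun p : R => p.1.1) (fun p : R => p.1.2) (r + η) (by linarith)
      (fun p q => le_trans (hdis _ p.2 _ q.2) (by linarith))
  have hIl : Isometry (Sum.inl : X → X ⊕ Y) := Isometry.of_dist_eq fun _ _ => rfl
  have hIr : Isometry (Sum.inr : Y → X ⊕ Y) := Isometry.of_dist_eq fun _ _ => rfl
  have key : ghDist X Y ≤ hausdorffDist (range (Sum.inl : X → X ⊕ Y))
      (range (Sum.inr : Y → X ⊕ Y)) := ghDist_le_hausdorffDist hIl hIr
  have hb : hausdorffDist (range (Sum.inl : X → X ⊕ Y)) (range (Sum.inr : Y → X ⊕ Y)) ≤ r + η := by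
    have hdd : ∀ (x : X) (y : Y), (x, y) ∈ R → dist (Sum.inl x : X ⊕ Y) (Sum.inr y) ≤ r + η := by
      intro x y hxy
      have : dist (Sum.inl x : X ⊕ Y) (Sum.inr y)
          = (⨅ p : R, dist x p.1.1 + dist y p.1.2) + (r + η) := rfl
      rw [this]
      have h0 : (⨅ p : R, dist x p.1.1 + dist y p.1.2) ≤ 0 := by
        have := ciInf_le (f := fun p : R => dist x p.1.1 + dist y p.1.2)
          ⟨0, fun v ⟨p, hp⟩ => by simp [← hp]; positivity⟩ ⟨(x, y), hxy⟩
        simpa using this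
      linarith
    apply hausdorffDist_le_of_mem_dist (by linarith)
    · rintro _ ⟨x, rfl⟩
      obtain ⟨y, hy⟩ := htot x
      exact ⟨Sum.inr y, mem_range_self _, hdd x y hy⟩
    · rintro _ ⟨y, rfl⟩
      obtain ⟨x, hx⟩ := hsurj y
      refine ⟨Sum.inl x, mem_range_self _, ?_⟩
      rw [dist_comm]; exact hdd x y hx
  calc dist (toGHSpace X) (toGHSpace Y) = ghDist X Y := rfl
    _ ≤ r + η := le_trans key hb

end Corr


section Lab



variable {X M : Type*} [MetricSpace X] [MetricSpace M]

lemma lab_exists [CompactSpace X] [Nonempty X] [CompactSpace M] [Nonempty M]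
    {c : ℝ} (hM1 : ∀ m m' : M, m ≠ m' → c ≤ dist m m') {r : ℝ}
    (h : dist (toGHSpace M) (toGHSpace X) < r) (h2r : 2 * r < c)
    (hcorr : ∃ R : Set (M × X), (∀ x, ∃ y, (x, y) ∈ R) ∧ (∀ y, ∃ x, (x, y) ∈ R) ∧
      ∀ p ∈ R, ∀ q ∈ R, |dist p.1 q.1 - dist p.2 q.2| ≤ 2 * r) :
    ∃ f : X → M, IsLab (2 * r) f := by
  obtain ⟨R, htot, hsurj, hdis⟩ := hcorr
  choose g hg using hsurj
  refine ⟨g, fun m => ?_, fun x y => ?_⟩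
  · obtain ⟨x, hx⟩ := htot m
    have hd := hdis (m, x) hx (g x, x) (hg x)
    simp only [dist_self, sub_zero] at hd
    rw [abs_of_nonneg dist_nonneg] at hd
    refine ⟨x, ?_⟩
    by_contra hne
    exact absurd (le_trans (hM1 m (g x) (fun hh => hne hh.symm)) hd) (not_le.2 h2r)
  · have := hdis (g x, x) (hg x) (g y, y) (hg y)
    rwa [abs_sub_comm] at this




variable {X M : Type*} [MetricSpace X] [MetricSpace M]

/-- Uniqueness of labelings, given `M` finite in general position with `≥ 3` points. -/
lemma lab_unique [Fintype M] (h3 : 3 ≤ Fintype.card M)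
    {c : ℝ}
    (hM1 : ∀ m m' : M, m ≠ m' → c ≤ dist m m')
    (hM2 : ∀ x y z w : M, x ≠ y → z ≠ w → ({x, y} : Set M) ≠ {z, w} →
      c ≤ |dist x y - dist z w|)
    {b b' : ℝ} (hbb : b + b' < c) {f g : X → M}
    (hf : IsLab b f) (hg : IsLab b' g) : f = g := by
  classical
  haveI : Nonempty M := Fintype.card_pos_iff.1 (by omega)
  obtain ⟨x₀, -⟩ := hf.1 (Classical.arbitrary M)
  have hb0 : 0 ≤ b := by simpa using hf.2 x₀ x₀
  have hb'0 : 0 ≤ b' := by simpa using hg.2 x₀ x₀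
  -- step 1 : g is constant on fibers of f
  have step1 : ∀ x y, f x = f y → g x = g y := by
    intro x y hxy
    have h1 : dist x y ≤ b := by
      have := hf.2 x y; rw [hxy, dist_self, sub_zero, abs_of_nonneg dist_nonneg] at this
      exact this
    have h2 : dist (g x) (g y) ≤ dist x y + b' := by
      have := abs_le.1 (hg.2 x y); linarith [this.1]
    by_contra hne
    exact absurd (le_trans (hM1 _ _ hne) (by linarith)) (not_le.2 (by linarith))
  set s : M → X := surjInv hf.1 with hs
  have hfs : ∀ m, f (s m) = m := fun m => surjInv_eq hf.1 m
  set σ : M → M := fun m => g (s m) with hσ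
  have hgf : ∀ x, g x = σ (f x) := fun x => step1 x (s (f x)) (by rw [hfs])
  have hσd : ∀ m m', |dist m m' - dist (σ m) (σ m')| ≤ b + b' := by
    intro m m'
    have h1 := hf.2 (s m) (s m')
    rw [hfs, hfs] at h1
    have h2 := hg.2 (s m) (s m')
    have := abs_le.1 h1; have := abs_le.1 h2
    rw [abs_le]; constructor <;> [linarith; linarith]
  have hσne : ∀ m m', m ≠ m' → σ m ≠ σ m' := by
    intro m m' hne heq
    have h1 := hM1 m m' hne
    have h2 := abs_le.1 (hσd m m')
    rw [heq, dist_self] at h2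
    have := h2.1
    simp only [sub_zero] at this
    linarith
  have hpair : ∀ m m', m ≠ m' → ({σ m, σ m'} : Set M) = {m, m'} := by
    intro m m' hne
    by_contra hset
    have := hM2 (σ m) (σ m') m m' (hσne m m' hne) hne hset
    rw [abs_sub_comm] at this
    linarith [hσd m m']
  have hid : ∀ m, σ m = m := by
    intro m
    by_contra hne
    obtain ⟨m₁, hm₁, m₂, hm₂, h12⟩ := Finset.one_lt_card.1
      (show 1 < (Finset.univ.erase m).card by
        rw [Finset.card_erase_of_mem (Finset.mem_univ m), Finset.card_univ]; omega)
    have e1 : σ m = m₁ := by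
      have hmem : σ m ∈ ({σ m, σ m₁} : Set M) := by left; rfl
      rw [hpair m m₁ (fun h => (Finset.mem_erase.1 hm₁).1 h.symm)] at hmem
      rcases hmem with h | h
      · exact absurd h hne
      · exact h
    have e2 : σ m = m₂ := by
      have hmem : σ m ∈ ({σ m, σ m₂} : Set M) := by left; rfl
      rw [hpair m m₂ (fun h => (Finset.mem_erase.1 hm₂).1 h.symm)] at hmem
      rcases hmem with h | h
      · exact absurd h hne
      · exact h
    exact h12 (e1 ▸ e2 ▸ rfl)
  funext x
  rw [hgf x, hid]


end Lab

section Shift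



variable {X M N : Type*}

/-- Type synonym carrying the shifted metric. -/
def Shifted (X : Type*) {M N : Type*} (_e : M ≃ N) (_f : X → M) : Type _ := X

def Shifted.mk (e : M ≃ N) (f : X → M) : X → Shifted X e f := id
def Shifted.un (e : M ≃ N) (f : X → M) : Shifted X e f → X := id

section ShiftMetric

variable [MetricSpace X] [MetricSpace M] [MetricSpace N] [DecidableEq M]
variable (e : M ≃ N) (f : X → M)

/-- The shifted distance. -/
def sDist (x y : X) : ℝ :=
  if f x = f y then dist x y
  else dist x y + dist (e (f x)) (e (f y)) - dist (f x) (f y)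

lemma sDist_pos_eq {x y : X} (h : f x = f y) : sDist e f x y = dist x y := if_pos h

lemma sDist_neg_eq {x y : X} (h : f x ≠ f y) :
    sDist e f x y = dist x y + dist (e (f x)) (e (f y)) - dist (f x) (f y) := if_neg h

variable {b c : ℝ} (hc : 0 < c)
  (hN1 : ∀ n n' : N, n ≠ n' → c ≤ dist n n')
  (hN3 : ∀ u v w : N, u ≠ v → v ≠ w → u ≠ w → dist u w + c ≤ dist u v + dist v w)
  (hb : ∀ x y : X, |dist x y - dist (f x) (f y)| ≤ b)
  (h3b : 3 * b ≤ c)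

section lemmas
include hb

lemma fib_small {x y : X} (h : f x = f y) : dist x y ≤ b := by
  have := hb x y; rw [h, dist_self, sub_zero, abs_of_nonneg dist_nonneg] at this; exact this

lemma dM_le (x y : X) : dist (f x) (f y) ≤ dist x y + b := by
  have := abs_le.1 (hb x y); linarith [this.1]

lemma dX_le (x y : X) : dist x y ≤ dist (f x) (f y) + b := by
  have := abs_le.1 (hb x y); linarith [this.2]

include hc hN1 h3b

lemma sDist_pos {x y : X} (h : f x ≠ f y) : c - 2 * b ≤ sDist e f x y := by
  have hne : e (f x) ≠ e (f y) := fun hh => h (e.injective hh)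
  have h1 := hN1 _ _ hne
  have h2 := dM_le f hb x y
  have hb0 : 0 ≤ b := by simpa using hb x x
  rw [sDist_neg_eq e f h]
  linarith [dist_nonneg (x := x) (y := y)]

include hN3

lemma sDist_triangle (x y z : X) : sDist e f x z ≤ sDist e f x y + sDist e f y z := by
  have hb0 : 0 ≤ b := by simpa using hb x x
  by_cases hxy : f x = f y <;> by_cases hyz : f y = f z
  · -- same, same : all equal
    have hxz : f x = f z := hxy.trans hyz
    rw [sDist_pos_eq e f hxy, sDist_pos_eq e f hyz, sDist_pos_eq e f hxz]
    exact dist_triangle x y z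
  · -- i = j ≠ k
    have hxz : f x ≠ f z := fun h => hyz (hxy.symm.trans h)
    rw [sDist_pos_eq e f hxy, sDist_neg_eq e f hyz, sDist_neg_eq e f hxz, hxy]
    linarith [dist_triangle x y z]
  · -- i ≠ j = k
    have hxz : f x ≠ f z := fun h => hxy (h.trans hyz.symm)
    rw [sDist_neg_eq e f hxy, sDist_pos_eq e f hyz, sDist_neg_eq e f hxz, hyz]
    linarith [dist_triangle x y z]
  · by_cases hxz : f x = f z
    · -- i = k ≠ j : LHS small, RHS big
      rw [sDist_pos_eq e f hxz, sDist_neg_eq e f hxy, sDist_neg_eq e f hyz]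
      have h1 : dist x z ≤ b := fib_small f hb hxz
      have h2 := hN1 _ _ (fun hh : e (f x) = e (f y) => hxy (e.injective hh))
      have h3 := hN1 _ _ (fun hh : e (f y) = e (f z) => hyz (e.injective hh))
      have h4 := dM_le f hb x y
      have h5 := dM_le f hb y z
      linarith
    · -- all distinct
      rw [sDist_neg_eq e f hxy, sDist_neg_eq e f hyz, sDist_neg_eq e f hxz]
      have hexy : e (f x) ≠ e (f y) := fun hh => hxy (e.injective hh)
      have heyz : e (f y) ≠ e (f z) := fun hh => hyz (e.injective hh)
      have hexz : e (f x) ≠ e (f z) := fun hh => hxz (e.injective hh)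
      have hslack := hN3 _ _ _ hexy heyz hexz
      have h1 := dX_le f hb x z
      have h2 := dM_le f hb x y
      have h3 := dM_le f hb y z
      have h4 : dist (f x) (f z) ≤ dist (f x) (f y) + dist (f y) (f z) := dist_triangle _ _ _
      -- goal: dX xz + dN - dM xz ≤ (dX xy + dN - dM xy) + (dX yz + dN - dM yz)
      have hxy' := abs_le.1 (hb x y)
      have hyz' := abs_le.1 (hb y z)
      have hxz' := abs_le.1 (hb x z)
      linarith [hxy'.1, hyz'.1, hxz'.2]
end lemmas

/-- The shifted metric space structure. -/
def shiftMetric : MetricSpace (Shifted X e f) where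
  dist p q := sDist e f (Shifted.un e f p) (Shifted.un e f q)
  dist_self p := by
    show sDist e f (Shifted.un e f p) (Shifted.un e f p) = 0
    rw [sDist_pos_eq e f rfl, dist_self]
  dist_comm p q := by
    show sDist e f (Shifted.un e f p) (Shifted.un e f q)
      = sDist e f (Shifted.un e f q) (Shifted.un e f p)
    by_cases h : f (Shifted.un e f p) = f (Shifted.un e f q)
    · rw [sDist_pos_eq e f h, sDist_pos_eq e f h.symm, dist_comm]
    · rw [sDist_neg_eq e f h, sDist_neg_eq e f (Ne.symm h), dist_comm,
        dist_comm (e (f (Shifted.un e f p))), dist_comm (f (Shifted.un e f p))]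
  dist_triangle p q r := sDist_triangle e f hc hN1 hN3 hb h3b _ _ _
  eq_of_dist_eq_zero := by
    intro p q h
    replace h : sDist e f (Shifted.un e f p) (Shifted.un e f q) = 0 := h
    by_cases hl : f (Shifted.un e f p) = f (Shifted.un e f q)
    · have : dist (Shifted.un e f p) (Shifted.un e f q) = 0 := by
        rwa [sDist_pos_eq e f hl] at h
      have h2 : Shifted.un e f p = Shifted.un e f q := eq_of_dist_eq_zero this
      exact h2
    · exfalso
      have h1 := sDist_pos e f hc hN1 hb h3b hl
      rw [h] at h1
      have hb0 : 0 ≤ b := by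
        simpa using hb (Shifted.un e f p) (Shifted.un e f p)
      linarith

end ShiftMetric

section ShiftMore

variable [MetricSpace X] [MetricSpace M] [MetricSpace N] [DecidableEq M]
variable (e : M ≃ N) (f : X → M)
variable {b c : ℝ} (hc : 0 < c)
  (hM1 : ∀ m m' : M, m ≠ m' → c ≤ dist m m')
  (hN1 : ∀ n n' : N, n ≠ n' → c ≤ dist n n')
  (hN3 : ∀ u v w : N, u ≠ v → v ≠ w → u ≠ w → dist u w + c ≤ dist u v + dist v w)
  (hb : ∀ x y : X, |dist x y - dist (f x) (f y)| ≤ b)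
  (h3b : 3 * b ≤ c)

include hM1 hb in
/-- labels are locally constant: close points have the same label. -/
lemma label_loc_const (x y : X) (h : dist x y < c - b) : f x = f y := by
  by_contra hne
  have h1 := hM1 _ _ hne
  have h2 := dM_le f hb x y
  linarith

include hc hM1 hN1 hN3 hb h3b in
lemma shifted_compact [CompactSpace X] [Nonempty X] :
    @CompactSpace (Shifted X e f)
      (shiftMetric e f hc hN1 hN3 hb h3b).toUniformSpace.toTopologicalSpace := by
  letI : MetricSpace (Shifted X e f) := shiftMetric e f hc hN1 hN3 hb h3b
  have hb0 : 0 ≤ b := by simpa using hb (Classical.arbitrary X) (Classical.arbitrary X)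
  have h2b : 2 * b < c := by
    rcases lt_or_eq_of_le hb0 with h | h
    · linarith
    · rw [← h]; linarith
  have hcont : Continuous (Shifted.mk e f) := by
    rw [Metric.continuous_iff]
    intro x ε hε
    refine ⟨min ε (c - 2 * b), lt_min hε (by linarith), fun a ha => ?_⟩
    have hlab : f a = f x :=
      label_loc_const f hM1 hb a x (lt_of_lt_of_le (lt_of_lt_of_le ha (min_le_right _ _)) (by linarith))
    have heq : dist (Shifted.mk e f a) (Shifted.mk e f x) = sDist e f a x := rfl
    rw [heq, sDist_pos_eq e f hlab]
    exact lt_of_lt_of_le ha (min_le_left _ _)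
  have hr : (univ : Set (Shifted X e f)) = range (Shifted.mk e f) :=
    (Set.range_eq_univ.2 fun y => ⟨y, rfl⟩).symm
  exact ⟨hr ▸ isCompact_range hcont⟩

include hb in
lemma shifted_lab (x y : X) :
    |sDist e f x y - dist (e (f x)) (e (f y))| ≤ b := by
  by_cases h : f x = f y
  · rw [sDist_pos_eq e f h, h, dist_self, sub_zero, abs_of_nonneg dist_nonneg]
    exact fib_small f hb h
  · rw [sDist_neg_eq e f h]
    have heq : dist x y + dist (e (f x)) (e (f y)) - dist (f x) (f y)
        - dist (e (f x)) (e (f y)) = dist x y - dist (f x) (f y) := by ring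
    rw [heq]
    exact hb x y

instance Shifted.nonempty {X M N : Type*} [Nonempty X] (e : M ≃ N) (f : X → M) :
    Nonempty (Shifted X e f) :=
  ⟨Shifted.mk e f (Classical.arbitrary X)⟩

end ShiftMore


end Shift

/-- Bundled general-position constants. -/
structure GPC (M : Type*) [MetricSpace M] (c : ℝ) : Prop where
  one : ∀ m m' : M, m ≠ m' → c ≤ dist m m'
  two : ∀ x y z w : M, x ≠ y → z ≠ w → ({x, y} : Set M) ≠ {z, w} → c ≤ |dist x y - dist z w|
  three : ∀ u v w : M, u ≠ v → v ≠ w → u ≠ w → dist u w + c ≤ dist u v + dist v w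

lemma GPC.mono {M : Type*} [MetricSpace M] {c c' : ℝ} (h : GPC M c) (hcc : c' ≤ c) :
    GPC M c' :=
  ⟨fun m m' hm => le_trans hcc (h.one m m' hm),
   fun x y z w h1 h2 h3 => le_trans hcc (h.two x y z w h1 h2 h3),
   fun u v w h1 h2 h3 => by linarith [h.three u v w h1 h2 h3]⟩

lemma exists_gpc (M : Type*) [MetricSpace M] [Finite M] (hGP : InGeneralPosition M) :
    ∃ c > 0, GPC M c := by
  obtain ⟨c₁, hc₁, h₁⟩ := pos_min (ι := {p : M × M // p.1 ≠ p.2}) (fun p => dist p.1.1 p.1.2)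
    (fun p => dist_pos.2 p.2)
  obtain ⟨c₂, hc₂, h₂⟩ := pos_min
    (ι := {q : (M × M) × M × M // q.1.1 ≠ q.1.2 ∧ q.2.1 ≠ q.2.2 ∧
      ({q.1.1, q.1.2} : Set M) ≠ {q.2.1, q.2.2}})
    (fun q => |dist q.1.1.1 q.1.1.2 - dist q.1.2.1 q.1.2.2|)
    (fun q => abs_pos.2 (sub_ne_zero.2 (hGP.1 _ _ _ _ q.2.1 q.2.2.1 q.2.2.2)))
  obtain ⟨c₃, hc₃, h₃⟩ := pos_min
    (ι := {t : M × M × M // t.1 ≠ t.2.1 ∧ t.2.1 ≠ t.2.2 ∧ t.1 ≠ t.2.2})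
    (fun t => dist t.1.1 t.1.2.1 + dist t.1.2.1 t.1.2.2 - dist t.1.1 t.1.2.2)
    (fun t => by
      show 0 < dist t.1.1 t.1.2.1 + dist t.1.2.1 t.1.2.2 - dist t.1.1 t.1.2.2
      linarith [hGP.2 t.1.1 t.1.2.1 t.1.2.2 t.2.1 t.2.2.1 t.2.2.2])
  refine ⟨min c₁ (min c₂ c₃), by positivity, ?_, ?_, ?_⟩
  · intro m m' hm
    exact le_trans (min_le_left _ _) (h₁ ⟨(m, m'), hm⟩)
  · intro x y z w h1 h2 h3
    exact le_trans (le_trans (min_le_right _ _) (min_le_left _ _)) (h₂ ⟨((x, y), (z, w)), h1, h2, h3⟩)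
  · intro u v w h1 h2 h3
    have := h₃ ⟨(u, v, w), h1, h2, h3⟩
    have h4 : min c₁ (min c₂ c₃) ≤ c₃ := le_trans (min_le_right _ _) (min_le_right _ _)
    linarith

section Transfer

variable {M N : Type} [MetricSpace M] [Fintype M] [Nonempty M]
  [MetricSpace N] [Fintype N] [Nonempty N] [DecidableEq M] [DecidableEq N]
variable (e : M ≃ N) {c : ℝ}

open Classical in
/-- The local isometry of GH-space: relabel distances of spaces near `M` by moving the
finite "skeleton" from `M` to `N`. -/
noncomputable def transfer (hc : 0 < c) (hM : GPC M c) (hN : GPC N c) (p : GHSpace) : GHSpace :=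
  if h : ∃ f : p.Rep → M, IsLab (3 * (c / 100)) f then
    @toGHSpace (Shifted p.Rep e (Classical.choose h))
      (shiftMetric e (Classical.choose h) hc hN.one hN.three (Classical.choose_spec h).2
        (by linarith))
      (shifted_compact e (Classical.choose h) hc hM.one hN.one hN.three
        (Classical.choose_spec h).2 (by linarith))
      (Shifted.nonempty e (Classical.choose h))
  else p

lemma lab_of_close {X : Type} [MetricSpace X] [CompactSpace X] [Nonempty X]
    (hc : 0 < c) (hM : GPC M c)
    (hd : dist (toGHSpace M) (toGHSpace X) < c / 100) :
    ∃ f : X → M, IsLab (3 * (c / 100)) f := by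
  obtain ⟨f, hsurj, hf⟩ := lab_exists (X := X) hM.one (r := 3 / 2 * (c / 100))
    (lt_of_lt_of_le hd (by linarith)) (by linarith)
    (exists_corr (X := M) (Y := X) (lt_of_lt_of_le hd (by linarith)))
  exact ⟨f, hsurj, fun x y => le_trans (hf x y) (by linarith)⟩

lemma lab_sharp {X : Type} [MetricSpace X] [CompactSpace X] [Nonempty X]
    (hc : 0 < c) (hM : GPC M c) (h3 : 3 ≤ Fintype.card M)
    (hd : dist (toGHSpace M) (toGHSpace X) < c / 100)
    {f : X → M} (hf : IsLab (3 * (c / 100)) f) (x y : X) :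
    |dist x y - dist (f x) (f y)| ≤ 2 * dist (toGHSpace M) (toGHSpace X) := by
  refine le_of_forall_pos_le_add fun η hη => ?_
  set η' := min η (c / 100) with hη'
  have hη'0 : 0 < η' := lt_min hη (by linarith)
  have hη'c : η' ≤ c / 100 := min_le_right _ _
  have hη'η : η' ≤ η := min_le_left _ _
  have hd0 : 0 ≤ dist (toGHSpace M) (toGHSpace X) := dist_nonneg
  obtain ⟨g, hg⟩ := lab_exists (X := X) hM.one (r := dist (toGHSpace M) (toGHSpace X) + η' / 2)
    (by linarith) (by linarith) (exists_corr (X := M) (Y := X) (by linarith))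
  have huniq : f = g := lab_unique h3 hM.one hM.two (by linarith) hf hg
  calc |dist x y - dist (f x) (f y)|
      ≤ 2 * (dist (toGHSpace M) (toGHSpace X) + η' / 2) := huniq ▸ hg.2 x y
    _ ≤ 2 * dist (toGHSpace M) (toGHSpace X) + η := by linarith

lemma transfer_mem (hc : 0 < c) (hM : GPC M c) (hN : GPC N c) (h3 : 3 ≤ Fintype.card M)
    {p : GHSpace} (hp : dist (toGHSpace M) p < c / 100) :
    dist (toGHSpace N) (transfer e hc hM hN p) ≤ dist (toGHSpace M) p := by
  have hd : dist (toGHSpace M) (toGHSpace p.Rep) < c / 100 := by rwa [p.toGHSpace_rep]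
  have hex := lab_of_close hc hM hd
  rw [transfer, dif_pos hex]
  set f := Classical.choose hex with hfdef
  have hf : IsLab (3 * (c / 100)) f := Classical.choose_spec hex
  have hsharp : ∀ x y : p.Rep, |dist x y - dist (f x) (f y)| ≤ 2 * dist (toGHSpace M) p := by
    intro x y
    have := lab_sharp hc hM h3 hd hf x y
    rwa [p.toGHSpace_rep] at this
  letI m2 : MetricSpace (Shifted p.Rep e f) :=
    shiftMetric e f hc hN.one hN.three hf.2 (by linarith)
  haveI cp : CompactSpace (Shifted p.Rep e f) :=
    shifted_compact e f hc hM.one hN.one hN.three hf.2 (by linarith)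
  exact dist_le_of_corr (X := N) (Y := Shifted p.Rep e f)
    {q | q.1 = e (f (Shifted.un e f q.2))}
    (fun n => ⟨Shifted.mk e f (surjInv hf.1 (e.symm n)), by
      show n = e (f (Shifted.un e f (Shifted.mk e f (surjInv hf.1 (e.symm n)))))
      show n = e (f (surjInv hf.1 (e.symm n)))
      rw [surjInv_eq hf.1, e.apply_symm_apply]⟩)
    (fun s => ⟨e (f (Shifted.un e f s)), rfl⟩)
    dist_nonneg
    (by
      rintro ⟨n, s⟩ hn ⟨n', s'⟩ hn'
      simp only [mem_setOf_eq] at hn hn'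
      subst hn; subst hn'
      have h1 : dist s s' = sDist e f (Shifted.un e f s) (Shifted.un e f s') := rfl
      rw [h1, abs_sub_comm]
      exact shifted_lab e f hsharp _ _)

lemma transfer_eq (hc : 0 < c) (hM : GPC M c) (hN : GPC N c) (h3 : 3 ≤ Fintype.card M)
    {X : Type} [MetricSpace X] [CompactSpace X] [Nonempty X] {p : GHSpace}
    (hX : toGHSpace X = p) {f : X → M} (hf : IsLab (3 * (c / 100)) f) :
    transfer e hc hM hN p =
      @toGHSpace (Shifted X e f)
        (shiftMetric e f hc hN.one hN.three hf.2 (by linarith))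
        (shifted_compact e f hc hM.one hN.one hN.three hf.2 (by linarith))
        (Shifted.nonempty e f) := by
  obtain ⟨ψ⟩ : Nonempty (X ≃ᵢ p.Rep) := by
    rw [← toGHSpace_eq_toGHSpace_iff_isometryEquiv, hX, p.toGHSpace_rep]
  have hlab : IsLab (3 * (c / 100)) (f ∘ ψ.symm) := by
    refine ⟨hf.1.comp ψ.symm.surjective, fun x y => ?_⟩
    have := hf.2 (ψ.symm x) (ψ.symm y)
    rwa [ψ.symm.dist_eq] at this
  have hex : ∃ g : p.Rep → M, IsLab (3 * (c / 100)) g := ⟨f ∘ ψ.symm, hlab⟩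
  rw [transfer, dif_pos hex]
  set g := Classical.choose hex with hgdef
  have hg : IsLab (3 * (c / 100)) g := Classical.choose_spec hex
  have hguniq : g = f ∘ ψ.symm := lab_unique h3 hM.one hM.two (by linarith) hg hlab
  letI mR : MetricSpace (Shifted p.Rep e g) :=
    shiftMetric e g hc hN.one hN.three hg.2 (by linarith)
  letI mX : MetricSpace (Shifted X e f) :=
    shiftMetric e f hc hN.one hN.three hf.2 (by linarith)
  haveI : CompactSpace (Shifted p.Rep e g) :=
    shifted_compact e g hc hM.one hN.one hN.three hg.2 (by linarith)
  haveI : CompactSpace (Shifted X e f) :=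
    shifted_compact e f hc hM.one hN.one hN.three hf.2 (by linarith)
  apply toGHSpace_eq_toGHSpace_iff_isometryEquiv.2
  refine ⟨{ toFun := fun a => Shifted.mk e f (ψ.symm (Shifted.un e g a)),
            invFun := fun b => Shifted.mk e g (ψ (Shifted.un e f b)),
            left_inv := fun a => by simp [Shifted.mk, Shifted.un]; exact ψ.apply_symm_apply a,
            right_inv := fun b => by simp [Shifted.mk, Shifted.un]; exact ψ.symm_apply_apply b,
            isometry_toFun := Isometry.of_dist_eq fun a b => ?_ }⟩
  show sDist e f (ψ.symm (Shifted.un e g a)) (ψ.symm (Shifted.un e g b))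
      = sDist e g (Shifted.un e g a) (Shifted.un e g b)
  set x := Shifted.un e g a with hx
  set y := Shifted.un e g b with hy
  have hgx : g x = f (ψ.symm x) := by rw [hguniq]; rfl
  have hgy : g y = f (ψ.symm y) := by rw [hguniq]; rfl
  by_cases hl : f (ψ.symm x) = f (ψ.symm y)
  · rw [sDist_pos_eq e f hl, sDist_pos_eq e g (by rw [hgx, hgy]; exact hl), ψ.symm.dist_eq]
  · rw [sDist_neg_eq e f hl, sDist_neg_eq e g (by rw [hgx, hgy]; exact hl), ψ.symm.dist_eq,
      hgx, hgy]

lemma transfer_invol (hc : 0 < c) (hM : GPC M c) (hN : GPC N c)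
    (h3 : 3 ≤ Fintype.card M) (h3N : 3 ≤ Fintype.card N)
    {p : GHSpace} (hp : dist (toGHSpace M) p < c / 100) :
    transfer e.symm hc hN hM (transfer e hc hM hN p) = p := by
  have hd : dist (toGHSpace M) (toGHSpace p.Rep) < c / 100 := by rwa [p.toGHSpace_rep]
  have hex := lab_of_close hc hM hd
  set f := Classical.choose hex with hfdef
  have hf : IsLab (3 * (c / 100)) f := Classical.choose_spec hex
  letI mS : MetricSpace (Shifted p.Rep e f) :=
    shiftMetric e f hc hN.one hN.three hf.2 (by linarith)
  haveI : CompactSpace (Shifted p.Rep e f) :=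
    shifted_compact e f hc hM.one hN.one hN.three hf.2 (by linarith)
  have hval : transfer e hc hM hN p = toGHSpace (Shifted p.Rep e f) := by
    rw [transfer, dif_pos hex]
  rw [hval]
  -- the labeling of the shifted space over `N`
  set g : Shifted p.Rep e f → N := fun s => e (f (Shifted.un e f s)) with hgdef
  have hg : IsLab (3 * (c / 100)) g := by
    constructor
    · intro n
      exact ⟨Shifted.mk e f (surjInv hf.1 (e.symm n)), by
        show e (f (surjInv hf.1 (e.symm n))) = n
        rw [surjInv_eq hf.1, e.apply_symm_apply]⟩
    · intro x y
      exact shifted_lab e f hf.2 (Shifted.un e f x) (Shifted.un e f y)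
  rw [transfer_eq e.symm hc hN hM h3N rfl hg]
  letI mT : MetricSpace (Shifted (Shifted p.Rep e f) e.symm g) :=
    shiftMetric e.symm g hc hM.one hM.three hg.2 (by linarith)
  haveI : CompactSpace (Shifted (Shifted p.Rep e f) e.symm g) :=
    shifted_compact e.symm g hc hN.one hM.one hM.three hg.2 (by linarith)
  have hiso : Nonempty ((Shifted (Shifted p.Rep e f) e.symm g) ≃ᵢ p.Rep) := ?_
  · exact (toGHSpace_eq_toGHSpace_iff_isometryEquiv.2 hiso).trans p.toGHSpace_rep
  refine ⟨{ toFun := fun a => Shifted.un e f (Shifted.un e.symm g a),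
            invFun := fun b => Shifted.mk e.symm g (Shifted.mk e f b),
            left_inv := fun a => rfl,
            right_inv := fun b => rfl,
            isometry_toFun := Isometry.of_dist_eq fun a b => ?_ }⟩
  show dist (Shifted.un e f (Shifted.un e.symm g a)) (Shifted.un e f (Shifted.un e.symm g b))
      = sDist e.symm g (Shifted.un e.symm g a) (Shifted.un e.symm g b)
  set x := Shifted.un e.symm g a with hx
  set y := Shifted.un e.symm g b with hy
  have hgx : g x = e (f (Shifted.un e f x)) := rfl
  have hgy : g y = e (f (Shifted.un e f y)) := rfl
  by_cases hl : f (Shifted.un e f x) = f (Shifted.un e f y)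
  · rw [sDist_pos_eq e.symm g (by rw [hgx, hgy, hl])]
    have : dist x y = sDist e f (Shifted.un e f x) (Shifted.un e f y) := rfl
    rw [this, sDist_pos_eq e f hl]
  · have hgne : g x ≠ g y := by
      rw [hgx, hgy]
      exact fun hh => hl (e.injective hh)
    rw [sDist_neg_eq e.symm g hgne]
    have hdxy : dist x y = sDist e f (Shifted.un e f x) (Shifted.un e f y) := rfl
    rw [hdxy, sDist_neg_eq e f hl, hgx, hgy, e.symm_apply_apply, e.symm_apply_apply]
    ring

lemma transfer_contract (hc : 0 < c) (hM : GPC M c) (hN : GPC N c) (h3 : 3 ≤ Fintype.card M)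
    {p q : GHSpace} (hp : dist (toGHSpace M) p < c / 100)
    (hq : dist (toGHSpace M) q < c / 100) :
    dist (transfer e hc hM hN p) (transfer e hc hM hN q) ≤ dist p q := by
  have hdp : dist (toGHSpace M) (toGHSpace p.Rep) < c / 100 := by rwa [p.toGHSpace_rep]
  have hdq : dist (toGHSpace M) (toGHSpace q.Rep) < c / 100 := by rwa [q.toGHSpace_rep]
  have hexp := lab_of_close hc hM hdp
  have hexq := lab_of_close hc hM hdq
  set fp := Classical.choose hexp with hfpdef
  have hfp : IsLab (3 * (c / 100)) fp := Classical.choose_spec hexp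
  set fq := Classical.choose hexq with hfqdef
  have hfq : IsLab (3 * (c / 100)) fq := Classical.choose_spec hexq
  letI mp : MetricSpace (Shifted p.Rep e fp) :=
    shiftMetric e fp hc hN.one hN.three hfp.2 (by linarith)
  haveI : CompactSpace (Shifted p.Rep e fp) :=
    shifted_compact e fp hc hM.one hN.one hN.three hfp.2 (by linarith)
  letI mq : MetricSpace (Shifted q.Rep e fq) :=
    shiftMetric e fq hc hN.one hN.three hfq.2 (by linarith)
  haveI : CompactSpace (Shifted q.Rep e fq) :=
    shifted_compact e fq hc hM.one hN.one hN.three hfq.2 (by linarith)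
  have hvp : transfer e hc hM hN p = toGHSpace (Shifted p.Rep e fp) := by
    rw [transfer, dif_pos hexp]
  have hvq : transfer e hc hM hN q = toGHSpace (Shifted q.Rep e fq) := by
    rw [transfer, dif_pos hexq]
  rw [hvp, hvq]
  have hpq : dist (toGHSpace p.Rep) (toGHSpace q.Rep) = dist p q := by
    rw [p.toGHSpace_rep, q.toGHSpace_rep]
  have hpq0 : 0 ≤ dist p q := dist_nonneg
  have hpq2 : dist p q < 2 * (c / 100) := by
    calc dist p q ≤ dist (toGHSpace M) p + dist (toGHSpace M) q := dist_triangle_left _ _ _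
      _ < 2 * (c / 100) := by linarith
  refine le_of_forall_pos_le_add fun η hη => ?_
  set η' := min η (c / 100) with hη'def
  have hη'0 : 0 < η' := lt_min hη (by linarith)
  have hη'c : η' ≤ c / 100 := min_le_right _ _
  have hη'η : η' ≤ η := min_le_left _ _
  obtain ⟨R, htot, hsurj, hdis⟩ := exists_corr (X := p.Rep) (Y := q.Rep)
    (show dist (toGHSpace p.Rep) (toGHSpace q.Rep) < dist p q + η' by rw [hpq]; linarith)
  have hdisB : ∀ pr ∈ R, ∀ qr ∈ R, |dist pr.1 qr.1 - dist pr.2 qr.2| ≤ 6 * (c / 100) :=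
    fun pr h1 qr h2 => le_trans (hdis pr h1 qr h2) (by linarith)
  choose xh hxh using hsurj
  set g : q.Rep → M := fun y => fp (xh y) with hgdef
  -- labels correspond along R
  have hfpfp : ∀ x x' : p.Rep, dist x x' ≤ 6 * (c / 100) → fp x = fp x' := by
    intro x x' hxx
    by_contra hne
    have h1 := hM.one _ _ hne
    have h2 := abs_le.1 (hfp.2 x x')
    linarith [h2.1]
  have hgb : ∀ y y' : q.Rep, |dist y y' - dist (g y) (g y')| ≤ 9 * (c / 100) := by
    intro y y'
    have t1 := abs_le.1 (hdisB (xh y, y) (hxh y) (xh y', y') (hxh y'))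
    have t2 := abs_le.1 (hfp.2 (xh y) (xh y'))
    dsimp only at t1
    simp only [hgdef]
    rw [abs_le]
    exact ⟨by linarith [t1.1, t1.2, t2.1, t2.2], by linarith [t1.1, t1.2, t2.1, t2.2]⟩
  have hclose : ∀ (x : p.Rep) (y : q.Rep), (x, y) ∈ R → fp (xh y) = fp x := by
    intro x y hxy
    have hd1 := hdisB (x, y) hxy (xh y, y) (hxh y)
    dsimp only at hd1
    rw [dist_self, sub_zero, abs_of_nonneg dist_nonneg] at hd1
    exact (hfpfp x (xh y) hd1).symm
  have hgsurj : Surjective g := by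
    intro m
    obtain ⟨x, hx⟩ := hfp.1 m
    obtain ⟨y, hy⟩ := htot x
    refine ⟨y, ?_⟩
    show fp (xh y) = m
    rw [hclose x y hy, hx]
  have huniq : g = fq := lab_unique h3 hM.one hM.two (by linarith) ⟨hgsurj, hgb⟩ hfq
  have hRlab : ∀ (x : p.Rep) (y : q.Rep), (x, y) ∈ R → fq y = fp x := by
    intro x y hxy
    have h1 : fq y = g y := by rw [huniq]
    rw [h1]
    show fp (xh y) = fp x
    exact hclose x y hxy
  have key := dist_le_of_corr (X := Shifted p.Rep e fp) (Y := Shifted q.Rep e fq)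
    {s | (Shifted.un e fp s.1, Shifted.un e fq s.2) ∈ R}
    (fun a => by
      obtain ⟨y, hy⟩ := htot (Shifted.un e fp a)
      exact ⟨Shifted.mk e fq y, hy⟩)
    (fun b => ⟨Shifted.mk e fp (xh (Shifted.un e fq b)), hxh _⟩)
    (show (0:ℝ) ≤ dist p q + η' by linarith)
    (by
      rintro ⟨a, b⟩ hab ⟨a', b'⟩ hab'
      simp only [mem_setOf_eq] at hab hab'
      have hl1 : fq (Shifted.un e fq b) = fp (Shifted.un e fp a) := hRlab _ _ hab
      have hl2 : fq (Shifted.un e fq b') = fp (Shifted.un e fp a') := hRlab _ _ hab'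
      have hdd := hdis _ hab _ hab'
      dsimp only at hdd ⊢
      have e1 : dist a a' = sDist e fp (Shifted.un e fp a) (Shifted.un e fp a') := rfl
      have e2 : dist b b' = sDist e fq (Shifted.un e fq b) (Shifted.un e fq b') := rfl
      by_cases hll : fp (Shifted.un e fp a) = fp (Shifted.un e fp a')
      · rw [e1, e2, sDist_pos_eq e fp hll, sDist_pos_eq e fq (by rw [hl1, hl2]; exact hll)]
        exact hdd
      · rw [e1, e2, sDist_neg_eq e fp hll,
          sDist_neg_eq e fq (by rw [hl1, hl2]; exact hll), hl1, hl2]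
        have harr : dist (Shifted.un e fp a) (Shifted.un e fp a')
            + dist (e (fp (Shifted.un e fp a))) (e (fp (Shifted.un e fp a')))
            - dist (fp (Shifted.un e fp a)) (fp (Shifted.un e fp a'))
            - (dist (Shifted.un e fq b) (Shifted.un e fq b')
            + dist (e (fp (Shifted.un e fp a))) (e (fp (Shifted.un e fp a')))
            - dist (fp (Shifted.un e fp a)) (fp (Shifted.un e fp a')))
            = dist (Shifted.un e fp a) (Shifted.un e fp a')
              - dist (Shifted.un e fq b) (Shifted.un e fq b') := by ring
        rw [harr]
        exact hdd)
  exact le_trans key (by linarith)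

end Transfer


end Stmt13

/-- for any two finite metric spaces `M`, `N` in general position with
the same number `n ≥ 3` of points, there is an `ε > 0` such that the open balls
`U_ε(M)` and `U_ε(N)` in the Gromov--Hausdorff space are isometric. -/
theorem stmt_13 (M N : Type) [MetricSpace M] [Fintype M] [Nonempty M]
    [MetricSpace N] [Fintype N] [Nonempty N]
    (hcard : Fintype.card M = Fintype.card N) (h3 : 3 ≤ Fintype.card M)
    (hGPM : InGeneralPosition M) (hGPN : InGeneralPosition N) :
    ∃ ε : ℝ, 0 < ε ∧
      Nonempty ((Metric.ball (GromovHausdorff.toGHSpace M) ε) ≃ᵢ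
        (Metric.ball (GromovHausdorff.toGHSpace N) ε)) := by
  classical
  obtain ⟨cM, hcM, hgM⟩ := Stmt13.exists_gpc M hGPM
  obtain ⟨cN, hcN, hgN⟩ := Stmt13.exists_gpc N hGPN
  set c := min cM cN with hcdef
  have hc : 0 < c := lt_min hcM hcN
  have hM : Stmt13.GPC M c := hgM.mono (min_le_left _ _)
  have hN : Stmt13.GPC N c := hgN.mono (min_le_right _ _)
  have h3N : 3 ≤ Fintype.card N := hcard ▸ h3
  set e := Fintype.equivOfCardEq hcard with hedef
  refine ⟨c / 100, by linarith, ⟨?_⟩⟩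
  have hmemF : ∀ p ∈ Metric.ball (GromovHausdorff.toGHSpace M) (c / 100),
      Stmt13.transfer e hc hM hN p ∈ Metric.ball (GromovHausdorff.toGHSpace N) (c / 100) := by
    intro p hp
    rw [Metric.mem_ball, dist_comm] at hp ⊢
    exact lt_of_le_of_lt (Stmt13.transfer_mem e hc hM hN h3 hp) hp
  have hmemG : ∀ p ∈ Metric.ball (GromovHausdorff.toGHSpace N) (c / 100),
      Stmt13.transfer e.symm hc hN hM p ∈ Metric.ball (GromovHausdorff.toGHSpace M) (c / 100) := by
    intro p hp
    rw [Metric.mem_ball, dist_comm] at hp ⊢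
    exact lt_of_le_of_lt (Stmt13.transfer_mem e.symm hc hN hM h3N hp) hp
  have hlinv : ∀ p ∈ Metric.ball (GromovHausdorff.toGHSpace M) (c / 100),
      Stmt13.transfer e.symm hc hN hM (Stmt13.transfer e hc hM hN p) = p := by
    intro p hp
    rw [Metric.mem_ball, dist_comm] at hp
    exact Stmt13.transfer_invol e hc hM hN h3 h3N hp
  have hrinv : ∀ p ∈ Metric.ball (GromovHausdorff.toGHSpace N) (c / 100),
      Stmt13.transfer e hc hM hN (Stmt13.transfer e.symm hc hN hM p) = p := by
    intro p hp
    rw [Metric.mem_ball, dist_comm] at hp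
    have := Stmt13.transfer_invol e.symm hc hN hM h3N h3 hp
    rwa [Equiv.symm_symm] at this
  refine { toFun := fun x => ⟨Stmt13.transfer e hc hM hN x.1, hmemF x.1 x.2⟩,
           invFun := fun y => ⟨Stmt13.transfer e.symm hc hN hM y.1, hmemG y.1 y.2⟩,
           left_inv := fun x => Subtype.ext (hlinv x.1 x.2),
           right_inv := fun y => Subtype.ext (hrinv y.1 y.2),
           isometry_toFun := Isometry.of_dist_eq fun x y => ?_ }
  have hx := x.2; have hy := y.2
  rw [Metric.mem_ball, dist_comm] at hx hy
  have hle : dist (Stmt13.transfer e hc hM hN x.1) (Stmt13.transfer e hc hM hN y.1)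
      ≤ dist x.1 y.1 := Stmt13.transfer_contract e hc hM hN h3 hx hy
  have hxm := hmemF x.1 x.2
  have hym := hmemF y.1 y.2
  rw [Metric.mem_ball, dist_comm] at hxm hym
  have hge := Stmt13.transfer_contract e.symm hc hN hM h3N hxm hym
  rw [hlinv x.1 x.2, hlinv y.1 y.2] at hge
  have heq : dist (Stmt13.transfer e hc hM hN x.1) (Stmt13.transfer e hc hM hN y.1)
      = dist x.1 y.1 := le_antisymm hle hge
  rw [Subtype.dist_eq, Subtype.dist_eq]
  exact heq
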